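/- Under the parameter specializations β_i = β for all i, α_i = c_{i-1,i-1} α_{i-1}/c_{i,i} for i > 1, and c_{i,j} = c for all i,j, the operators φ(X_i) on T_n satisfy the braid relations: φ(X_i)φ(X_{i+1})φ(X_i) = φ(X_{i+1})φ(X_i)φ(X_{i+1}) for 1 ≤ i ≤ n-2, and φ(X_i)φ(X_j) = φ(X_j)φ(X_i) for |i-j| > 1; hence φ extends to a representation of the braid group B_n on T_n. -/

import Mathlib

/-- The braid operator `φ(X_i)` on the algebra `T_n` (with basis `1, f_{j,k}`), defined by
`f_{j,j} ↦ f_{j,j}` for `j ≠ i, i+1`, `f_{i+1,i+1} ↦ f_{i,i}`,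
`f_{i,i} ↦ α⁻¹ (Y_i Y_{i+1} Y_i⁻¹ - β)`, `f_{j,k} ↦ φ(X_i)(f_{j,j}) φ(X_i)(f_{k,k}) c⁻¹`
for `j ≠ k`, and `1 ↦ 1`; here `Y_k = α f_{k,k} + β` and
`Y_k⁻¹ = β⁻¹ (1 - α γ⁻¹ f_{k,k})` with `γ = β + cα`. -/
noncomputable def phiOp {R T : Type*} [CommRing R] [Ring T] [Algebra R T]
    {n : ℕ} (f : Fin n → Fin n → T) (b : Module.Basis (Option (Fin n × Fin n)) R T)
    (c α β γ : Rˣ) (i : ℕ) (hi : i + 1 < n) : T →ₗ[R] T :=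
  letI ii : Fin n := ⟨i, Nat.lt_of_succ_lt hi⟩
  letI jj : Fin n := ⟨i + 1, hi⟩
  letI Y : Fin n → T := fun k => (α : R) • f k k + (β : R) • 1
  letI Yinv : Fin n → T := fun k =>
    ((β⁻¹ : Rˣ) : R) • (1 - ((α : R) * ((γ⁻¹ : Rˣ) : R)) • f k k)
  letI d : Fin n → T := fun k =>
    if k = ii then ((α⁻¹ : Rˣ) : R) • (Y ii * Y jj * Yinv ii - (β : R) • 1)
    else if k = jj then f ii ii
    else f k k
  b.constr ℕ fun x => match x with
    | none => 1
    | some (j, k) => if j = k then d j else ((c⁻¹ : Rˣ) : R) • (d j * d k)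

section Aux

variable {R T : Type*} [CommRing R] [Ring T] [Algebra R T] {n : ℕ}

/-- Explicit form of the building-block elements of the braid operator. -/
noncomputable def braidDD (f : Fin n → Fin n → T) (c α β γ : Rˣ) (i : ℕ) (hi : i + 1 < n)
    (k : Fin n) : T :=
  if k = (⟨i, Nat.lt_of_succ_lt hi⟩ : Fin n) then
    f ⟨i+1, hi⟩ ⟨i+1, hi⟩
      + ((c:R) * (α:R) * ((β⁻¹ : Rˣ):R)) • f ⟨i, Nat.lt_of_succ_lt hi⟩ ⟨i+1, hi⟩
      - (((c:R) * (α:R) * ((β⁻¹ : Rˣ):R)) * ((c:R) * (α:R) * ((γ⁻¹ : Rˣ):R)))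
          • f ⟨i, Nat.lt_of_succ_lt hi⟩ ⟨i, Nat.lt_of_succ_lt hi⟩
      - ((c:R) * (α:R) * ((γ⁻¹ : Rˣ):R)) • f ⟨i+1, hi⟩ ⟨i, Nat.lt_of_succ_lt hi⟩
  else if k = (⟨i+1, hi⟩ : Fin n) then f ⟨i, Nat.lt_of_succ_lt hi⟩ ⟨i, Nat.lt_of_succ_lt hi⟩
  else f k k

variable (f : Fin n → Fin n → T) (c α β γ : Rˣ)

lemma braidDD_x (i : ℕ) (hi : i + 1 < n) :
    braidDD f c α β γ i hi ⟨i, Nat.lt_of_succ_lt hi⟩ =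
    f ⟨i+1, hi⟩ ⟨i+1, hi⟩
      + ((c:R) * (α:R) * ((β⁻¹ : Rˣ):R)) • f ⟨i, Nat.lt_of_succ_lt hi⟩ ⟨i+1, hi⟩
      - (((c:R) * (α:R) * ((β⁻¹ : Rˣ):R)) * ((c:R) * (α:R) * ((γ⁻¹ : Rˣ):R)))
          • f ⟨i, Nat.lt_of_succ_lt hi⟩ ⟨i, Nat.lt_of_succ_lt hi⟩
      - ((c:R) * (α:R) * ((γ⁻¹ : Rˣ):R)) • f ⟨i+1, hi⟩ ⟨i, Nat.lt_of_succ_lt hi⟩ := by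
  rw [braidDD, if_pos rfl]

lemma braidDD_y (i : ℕ) (hi : i + 1 < n) :
    braidDD f c α β γ i hi ⟨i+1, hi⟩ =
      f ⟨i, Nat.lt_of_succ_lt hi⟩ ⟨i, Nat.lt_of_succ_lt hi⟩ := by
  rw [braidDD, if_neg (by simp), if_pos rfl]

lemma braidDD_other (i : ℕ) (hi : i + 1 < n) (k : Fin n) (h1 : (k:ℕ) ≠ i) (h2 : (k:ℕ) ≠ i+1) :
    braidDD f c α β γ i hi k = f k k := by
  rw [braidDD, if_neg (by simp [Fin.ext_iff, h1]), if_neg (by simp [Fin.ext_iff, h2])]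

/-- The core computation: `α⁻¹ (Y_i Y_{i+1} Y_i⁻¹ − β)` in explicit form. -/
lemma braid_dY (hγ : (γ : R) = (β : R) + (c : R) * (α : R))
    (hrel : ∀ i j k l, f i j * f k l = (c : R) • f i l) (x y : Fin n) :
    ((α⁻¹ : Rˣ):R) • (((α : R) • f x x + (β : R) • 1) * ((α : R) • f y y + (β : R) • 1) *
        (((β⁻¹ : Rˣ):R) • (1 - ((α : R) * ((γ⁻¹ : Rˣ):R)) • f x x)) - (β : R) • 1) =
      f y y + ((c:R) * (α:R) * ((β⁻¹ : Rˣ):R)) • f x y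
        - (((c:R) * (α:R) * ((β⁻¹ : Rˣ):R)) * ((c:R) * (α:R) * ((γ⁻¹ : Rˣ):R))) • f x x
        - ((c:R) * (α:R) * ((γ⁻¹ : Rˣ):R)) • f y x := by
  have hA : (α:R) * ((α⁻¹ : Rˣ):R) = 1 := Units.mul_inv α
  have hB : (β:R) * ((β⁻¹ : Rˣ):R) = 1 := Units.mul_inv β
  have hG : (γ:R) * ((γ⁻¹ : Rˣ):R) = 1 := Units.mul_inv γ
  simp only [mul_add, add_mul, mul_sub, sub_mul, smul_mul_assoc, mul_smul_comm, hrel,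
    smul_smul, mul_one, one_mul, smul_sub, smul_add]
  match_scalars
  · linear_combination ((c:R)*(α:R)*((β⁻¹:Rˣ):R)) * hA
  · linear_combination ((β:R)*((β⁻¹:Rˣ):R)) * hA + hB
  · linear_combination (((β⁻¹:Rˣ):R)*(β:R) - ((β⁻¹:Rˣ):R)*((γ⁻¹:Rˣ):R)*((α:R)*(α:R)*(c:R)*(c:R) + (α:R)*(β:R)*(c:R) + (β:R)*(β:R)))*hA - ((β⁻¹:Rˣ):R)*(β:R)*hG + ((β⁻¹:Rˣ):R)*((γ⁻¹:Rˣ):R)*(β:R)*hγ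
  · linear_combination ((α⁻¹:Rˣ):R)*(β:R)*hB
  · linear_combination (-(((γ⁻¹:Rˣ):R)*(α:R)*(c:R)*((β⁻¹:Rˣ):R)*(β:R)))*hA - (((γ⁻¹:Rˣ):R)*(α:R)*(c:R))*hB

lemma braid_hv (hγ : (γ : R) = (β : R) + (c : R) * (α : R)) :
    ((c:R)*(α:R)*((γ⁻¹:Rˣ):R)) * (1 + (c:R)*(α:R)*((β⁻¹:Rˣ):R)) = (c:R)*(α:R)*((β⁻¹:Rˣ):R) := by
  have hB : (β:R) * ((β⁻¹ : Rˣ):R) = 1 := Units.mul_inv β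
  have hG : (γ:R) * ((γ⁻¹ : Rˣ):R) = 1 := Units.mul_inv γ
  linear_combination ((c:R)*(α:R)*((β⁻¹:Rˣ):R))*hG -
    ((c:R)*(α:R)*((β⁻¹:Rˣ):R)*((γ⁻¹:Rˣ):R))*hγ - ((c:R)*(α:R)*((γ⁻¹:Rˣ):R))*hB

lemma braidDD_sq (hγ : (γ : R) = (β : R) + (c : R) * (α : R))
    (hrel : ∀ i j k l, f i j * f k l = (c : R) • f i l) (i : ℕ) (hi : i + 1 < n) (k : Fin n) :
    braidDD f c α β γ i hi k * braidDD f c α β γ i hi k = (c:R) • braidDD f c α β γ i hi k := by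
  have hv := braid_hv (R := R) c α β γ hγ
  by_cases hx : k = (⟨i, Nat.lt_of_succ_lt hi⟩ : Fin n)
  · subst hx
    rw [braidDD_x]
    simp only [mul_add, add_mul, mul_sub, sub_mul, smul_mul_assoc, mul_smul_comm, hrel,
      smul_smul, smul_sub, smul_add]
    match_scalars
    all_goals first
      | linear_combination (-(c:R))*hv
      | linear_combination (-((c:R)*((c:R)*(α:R)*((β⁻¹:Rˣ):R))))*hv
      | linear_combination ((c:R)*((c:R)*(α:R)*((β⁻¹:Rˣ):R))*((c:R)*(α:R)*((γ⁻¹:Rˣ):R)))*hv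
      | linear_combination ((c:R)*((c:R)*(α:R)*((γ⁻¹:Rˣ):R)))*hv
  · by_cases hy : k = (⟨i+1, hi⟩ : Fin n)
    · subst hy; rw [braidDD_y, hrel]
    · rw [braidDD_other f c α β γ i hi k (by simpa [Fin.ext_iff] using hx)
        (by simpa [Fin.ext_iff] using hy), hrel]

variable (b : Module.Basis (Option (Fin n × Fin n)) R T)

lemma phiOp_apply_one (hb1 : b none = 1) (i : ℕ) (hi : i + 1 < n) :
    phiOp f b c α β γ i hi 1 = 1 := by
  conv_lhs => rw [← hb1]
  simp only [phiOp, Module.Basis.constr_basis]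

lemma phiOp_apply_f (hb1 : b none = 1) (hbf : ∀ j k, b (some (j, k)) = f j k)
    (hγ : (γ : R) = (β : R) + (c : R) * (α : R))
    (hrel : ∀ i j k l, f i j * f k l = (c : R) • f i l)
    (i : ℕ) (hi : i + 1 < n) (p q : Fin n) :
    phiOp f b c α β γ i hi (f p q) =
      ((c⁻¹ : Rˣ):R) • (braidDD f c α β γ i hi p * braidDD f c α β γ i hi q) := by
  have hd : ∀ k : Fin n,
      (if k = (⟨i, Nat.lt_of_succ_lt hi⟩ : Fin n) then
        ((α⁻¹ : Rˣ):R) • (((α : R) • f ⟨i, Nat.lt_of_succ_lt hi⟩ ⟨i, Nat.lt_of_succ_lt hi⟩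
            + (β : R) • 1) * ((α : R) • f ⟨i+1, hi⟩ ⟨i+1, hi⟩ + (β : R) • 1) *
          (((β⁻¹ : Rˣ):R) • (1 - ((α : R) * ((γ⁻¹ : Rˣ):R))
            • f ⟨i, Nat.lt_of_succ_lt hi⟩ ⟨i, Nat.lt_of_succ_lt hi⟩)) - (β : R) • 1)
      else if k = (⟨i+1, hi⟩ : Fin n) then f ⟨i, Nat.lt_of_succ_lt hi⟩ ⟨i, Nat.lt_of_succ_lt hi⟩
      else f k k) = braidDD f c α β γ i hi k := by
    intro k
    by_cases hx : k = (⟨i, Nat.lt_of_succ_lt hi⟩ : Fin n)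
    · rw [if_pos hx, hx, braidDD_x]
      exact braid_dY f c α β γ hγ hrel _ _
    · rw [if_neg hx, braidDD, if_neg hx]
  conv_lhs => rw [← hbf p q]
  simp only [phiOp, Module.Basis.constr_basis]
  by_cases hpq : p = q
  · subst hpq
    rw [if_pos rfl, hd, braidDD_sq f c α β γ hγ hrel, smul_smul, Units.inv_mul, one_smul]
  · rw [if_neg hpq, hd, hd]

lemma braid_sandwich (hγ : (γ : R) = (β : R) + (c : R) * (α : R))
    (hrel : ∀ i j k l, f i j * f k l = (c : R) • f i l)
    (i : ℕ) (hi : i + 1 < n) (k : Fin n) (p p' q' q : Fin n) :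
    f p p' * braidDD f c α β γ i hi k * f q' q = ((c:R)*(c:R)) • f p q := by
  have hv := braid_hv (R := R) c α β γ hγ
  by_cases hx : k = (⟨i, Nat.lt_of_succ_lt hi⟩ : Fin n)
  · rw [hx, braidDD_x]
    simp only [mul_add, add_mul, mul_sub, sub_mul, smul_mul_assoc, mul_smul_comm, hrel,
      smul_smul, smul_sub, smul_add]
    match_scalars
    linear_combination (-((c:R)*(c:R)))*hv
  · rw [braidDD, if_neg hx]
    split_ifs <;> rw [hrel, smul_mul_assoc, hrel, smul_smul]

lemma braid_span (i : ℕ) (hi : i + 1 < n) (k : Fin n) :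
    braidDD f c α β γ i hi k ∈
      Submodule.span R (Set.range fun pq : Fin n × Fin n => f pq.1 pq.2) := by
  have hmem : ∀ p q : Fin n, f p q ∈
      Submodule.span R (Set.range fun pq : Fin n × Fin n => f pq.1 pq.2) :=
    fun p q => Submodule.subset_span ⟨(p, q), rfl⟩
  rw [braidDD]
  split_ifs
  · exact sub_mem (sub_mem (add_mem (hmem _ _) (Submodule.smul_mem _ _ (hmem _ _)))
      (Submodule.smul_mem _ _ (hmem _ _))) (Submodule.smul_mem _ _ (hmem _ _))
  · exact hmem _ _
  · exact hmem _ _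

lemma braid_absorb (hγ : (γ : R) = (β : R) + (c : R) * (α : R))
    (hrel : ∀ i j k l, f i j * f k l = (c : R) • f i l)
    (i : ℕ) (hi : i + 1 < n) (k : Fin n) (x y : T)
    (hx : x ∈ Submodule.span R (Set.range fun pq : Fin n × Fin n => f pq.1 pq.2))
    (hy : y ∈ Submodule.span R (Set.range fun pq : Fin n × Fin n => f pq.1 pq.2)) :
    x * (braidDD f c α β γ i hi k * y) = (c : R) • (x * y) := by
  induction hx using Submodule.span_induction generalizing y with
  | mem x hxm =>
    obtain ⟨⟨p, p'⟩, rfl⟩ := hxm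
    induction hy using Submodule.span_induction with
    | mem y hym =>
      obtain ⟨⟨q', q⟩, rfl⟩ := hym
      rw [← mul_assoc, braid_sandwich f c α β γ hγ hrel, hrel, smul_smul]
    | zero => simp
    | add y z hy hz py pz => rw [mul_add, mul_add, mul_add, py, pz, smul_add]
    | smul r y hy py => rw [mul_smul_comm, mul_smul_comm, py, mul_smul_comm, smul_comm]
  | zero => simp
  | add x z hxm hzm px pz => simp [add_mul, px _ hy, pz _ hy]
  | smul r x hxm px => rw [smul_mul_assoc, px _ hy, smul_mul_assoc, smul_comm]

lemma phiOp_mul (hb1 : b none = 1) (hbf : ∀ j k, b (some (j, k)) = f j k)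
    (hγ : (γ : R) = (β : R) + (c : R) * (α : R))
    (hrel : ∀ i j k l, f i j * f k l = (c : R) • f i l)
    (i : ℕ) (hi : i + 1 < n) (x y : T) :
    phiOp f b c α β γ i hi (x * y) =
      phiOp f b c α β γ i hi x * phiOp f b c α β γ i hi y := by
  set P := phiOp f b c α β γ i hi with hP
  have h2 : (LinearMap.mul R T).compr₂ P = (LinearMap.mul R T).compl₁₂ P P := by
    apply b.ext; intro u
    apply b.ext; intro v
    simp only [LinearMap.compr₂_apply, LinearMap.compl₁₂_apply, LinearMap.mul_apply']
    match u, v with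
    | none, none => rw [hb1, one_mul, phiOp_apply_one f c α β γ b hb1, one_mul]
    | none, some (q', q) =>
      rw [hb1, one_mul, phiOp_apply_one f c α β γ b hb1, one_mul]
    | some (p, p'), none =>
      rw [hb1, mul_one, phiOp_apply_one f c α β γ b hb1, mul_one]
    | some (p, p'), some (q', q) =>
      rw [hbf, hbf, hrel, map_smul,
        phiOp_apply_f f c α β γ b hb1 hbf hγ hrel i hi,
        phiOp_apply_f f c α β γ b hb1 hbf hγ hrel i hi,
        phiOp_apply_f f c α β γ b hb1 hbf hγ hrel i hi]
      rw [smul_mul_smul_comm, mul_assoc (braidDD f c α β γ i hi p),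
        braid_absorb f c α β γ hγ hrel i hi q' _ _
          (braid_span f c α β γ i hi p') (braid_span f c α β γ i hi q),
        mul_smul_comm,
        braid_absorb f c α β γ hγ hrel i hi p' _ _
          (braid_span f c α β γ i hi p) (braid_span f c α β γ i hi q)]
      rw [smul_smul, smul_smul, smul_smul]
      have hc : (c:R) * ((c⁻¹ : Rˣ):R) = 1 := Units.mul_inv c
      have hc2 : ((c:R) * ((c⁻¹ : Rˣ):R)) * ((c:R) * ((c⁻¹ : Rˣ):R)) = 1 := by
        rw [hc, one_mul]
      have hc3 : ((c:R) * ((c⁻¹ : Rˣ):R)) * (((c:R) * ((c⁻¹ : Rˣ):R)) * ((c:R) * ((c⁻¹ : Rˣ):R))) = 1 := by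
        rw [hc, one_mul, one_mul]
      match_scalars
      linear_combination hc - hc2
  have := LinearMap.congr_fun (LinearMap.congr_fun h2 x) y
  simpa only [LinearMap.compr₂_apply, LinearMap.compl₁₂_apply, LinearMap.mul_apply'] using this

lemma phiOp_apply_diag (hb1 : b none = 1) (hbf : ∀ j k, b (some (j, k)) = f j k)
    (hγ : (γ : R) = (β : R) + (c : R) * (α : R))
    (hrel : ∀ i j k l, f i j * f k l = (c : R) • f i l)
    (i : ℕ) (hi : i + 1 < n) (k : Fin n) :
    phiOp f b c α β γ i hi (f k k) = braidDD f c α β γ i hi k := by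
  rw [phiOp_apply_f f c α β γ b hb1 hbf hγ hrel, braidDD_sq f c α β γ hγ hrel,
    smul_smul, Units.inv_mul, one_smul]

lemma phiOp_fix (hb1 : b none = 1) (hbf : ∀ j k, b (some (j, k)) = f j k)
    (hγ : (γ : R) = (β : R) + (c : R) * (α : R))
    (hrel : ∀ i j k l, f i j * f k l = (c : R) • f i l)
    (i : ℕ) (hi : i + 1 < n) (p q : Fin n)
    (hp1 : (p:ℕ) ≠ i) (hp2 : (p:ℕ) ≠ i+1) (hq1 : (q:ℕ) ≠ i) (hq2 : (q:ℕ) ≠ i+1) :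
    phiOp f b c α β γ i hi (f p q) = f p q := by
  rw [phiOp_apply_f f c α β γ b hb1 hbf hγ hrel,
    braidDD_other f c α β γ i hi p hp1 hp2, braidDD_other f c α β γ i hi q hq1 hq2,
    hrel, smul_smul, Units.inv_mul, one_smul]

lemma braidDD_x' (i : ℕ) (hi : i + 1 < n) (p q : Fin n) (hp : (p:ℕ) = i) (hq : (q:ℕ) = i+1) :
    braidDD f c α β γ i hi p =
      f q q + ((c:R) * (α:R) * ((β⁻¹ : Rˣ):R)) • f p q
        - (((c:R) * (α:R) * ((β⁻¹ : Rˣ):R)) * ((c:R) * (α:R) * ((γ⁻¹ : Rˣ):R))) • f p p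
        - ((c:R) * (α:R) * ((γ⁻¹ : Rˣ):R)) • f q p := by
  have hp' : p = (⟨i, Nat.lt_of_succ_lt hi⟩ : Fin n) := Fin.eq_of_val_eq hp
  have hq' : q = (⟨i+1, hi⟩ : Fin n) := Fin.eq_of_val_eq hq
  rw [hp', hq', braidDD_x]

lemma braidDD_y' (i : ℕ) (hi : i + 1 < n) (p q : Fin n) (hp : (p:ℕ) = i) (hq : (q:ℕ) = i+1) :
    braidDD f c α β γ i hi q = f p p := by
  have hp' : p = (⟨i, Nat.lt_of_succ_lt hi⟩ : Fin n) := Fin.eq_of_val_eq hp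
  have hq' : q = (⟨i+1, hi⟩ : Fin n) := Fin.eq_of_val_eq hq
  rw [hp', hq', braidDD_y]

set_option maxHeartbeats 2000000 in
lemma braid_core (hb1 : b none = 1) (hbf : ∀ j k, b (some (j, k)) = f j k)
    (hγ : (γ : R) = (β : R) + (c : R) * (α : R))
    (hrel : ∀ i j k l, f i j * f k l = (c : R) • f i l)
    (i : ℕ) (h1 : i + 1 < n) (h2 : i + 1 + 1 < n) (k : Fin n) :
    phiOp f b c α β γ i h1 (phiOp f b c α β γ (i+1) h2 (phiOp f b c α β γ i h1 (f k k))) =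
      phiOp f b c α β γ (i+1) h2
        (phiOp f b c α β γ i h1 (phiOp f b c α β γ (i+1) h2 (f k k))) := by
  have hv := braid_hv (R := R) c α β γ hγ
  have hc : (c:R) * ((c⁻¹ : Rˣ):R) = 1 := Units.mul_inv c
  set L : R := (c:R) * (α:R) * ((β⁻¹ : Rˣ):R) with hL
  set V : R := (c:R) * (α:R) * ((γ⁻¹ : Rˣ):R) with hV
  set x : Fin n := ⟨i, by omega⟩ with hxd
  set y : Fin n := ⟨i+1, by omega⟩ with hyd
  set z : Fin n := ⟨i+2, by omega⟩ with hzd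
  have hxv : (x:ℕ) = i := rfl
  have hyv : (y:ℕ) = i+1 := rfl
  have hzv : (z:ℕ) = i+2 := rfl
  set P := phiOp f b c α β γ i h1 with hPdef
  set Q := phiOp f b c α β γ (i+1) h2 with hQdef
  -- values of the building blocks
  have Dix : braidDD f c α β γ i h1 x = f y y + L • f x y - (L*V) • f x x - V • f y x :=
    braidDD_x' f c α β γ i h1 x y rfl rfl
  have Diy : braidDD f c α β γ i h1 y = f x x := braidDD_y' f c α β γ i h1 x y rfl rfl
  have Diz : braidDD f c α β γ i h1 z = f z z :=
    braidDD_other f c α β γ i h1 z (by simp [hzv]) (by simp [hzv])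
  have Djx : braidDD f c α β γ (i+1) h2 x = f x x :=
    braidDD_other f c α β γ (i+1) h2 x (by simp only [hxv]; omega) (by simp only [hxv]; omega)
  have Djy : braidDD f c α β γ (i+1) h2 y = f z z + L • f y z - (L*V) • f y y - V • f z y :=
    braidDD_x' f c α β γ (i+1) h2 y z rfl rfl
  have Djz : braidDD f c α β γ (i+1) h2 z = f y y := braidDD_y' f c α β γ (i+1) h2 y z rfl rfl
  -- values of P and Q on the f p q
  have Pd : ∀ t : Fin n, P (f t t) = braidDD f c α β γ i h1 t := fun t =>
    phiOp_apply_diag f c α β γ b hb1 hbf hγ hrel i h1 t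
  have Qd : ∀ t : Fin n, Q (f t t) = braidDD f c α β γ (i+1) h2 t := fun t =>
    phiOp_apply_diag f c α β γ b hb1 hbf hγ hrel (i+1) h2 t
  have Pv : ∀ p q : Fin n, P (f p q) =
      ((c⁻¹ : Rˣ):R) • (braidDD f c α β γ i h1 p * braidDD f c α β γ i h1 q) := fun p q =>
    phiOp_apply_f f c α β γ b hb1 hbf hγ hrel i h1 p q
  have Qv : ∀ p q : Fin n, Q (f p q) =
      ((c⁻¹ : Rˣ):R) • (braidDD f c α β γ (i+1) h2 p * braidDD f c α β γ (i+1) h2 q) := fun p q =>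
    phiOp_apply_f f c α β γ b hb1 hbf hγ hrel (i+1) h2 p q
  have Pxx : P (f x x) = f y y + L • f x y - (L*V) • f x x - V • f y x := by rw [Pd, Dix]
  have Pyy : P (f y y) = f x x := by rw [Pd, Diy]
  have Pzz : P (f z z) = f z z := by rw [Pd, Diz]
  have Qxx : Q (f x x) = f x x := by rw [Qd, Djx]
  have Qyy : Q (f y y) = f z z + L • f y z - (L*V) • f y y - V • f z y := by rw [Qd, Djy]
  have Qzz : Q (f z z) = f y y := by rw [Qd, Djz]
  have Pyz : P (f y z) = f x z := by
    rw [Pv, Diy, Diz, hrel, smul_smul, Units.inv_mul, one_smul]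
  have Pzy : P (f z y) = f z x := by
    rw [Pv, Diz, Diy, hrel, smul_smul, Units.inv_mul, one_smul]
  have Qxz : Q (f x z) = f x y := by
    rw [Qv, Djx, Djz, hrel, smul_smul, Units.inv_mul, one_smul]
  have Qzx : Q (f z x) = f y x := by
    rw [Qv, Djz, Djx, hrel, smul_smul, Units.inv_mul, one_smul]
  have Pxz : P (f x z) = ((c⁻¹ : Rˣ):R) •
      ((f y y + L • f x y - (L*V) • f x x - V • f y x) * f z z) := by rw [Pv, Dix, Diz]
  have Pxy : P (f x y) = ((c⁻¹ : Rˣ):R) •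
      ((f y y + L • f x y - (L*V) • f x x - V • f y x) * f x x) := by rw [Pv, Dix, Diy]
  have Pzx : P (f z x) = ((c⁻¹ : Rˣ):R) •
      (f z z * (f y y + L • f x y - (L*V) • f x x - V • f y x)) := by rw [Pv, Diz, Dix]
  have Pyx : P (f y x) = ((c⁻¹ : Rˣ):R) •
      (f x x * (f y y + L • f x y - (L*V) • f x x - V • f y x)) := by rw [Pv, Diy, Dix]
  have Qxy : Q (f x y) = ((c⁻¹ : Rˣ):R) •
      (f x x * (f z z + L • f y z - (L*V) • f y y - V • f z y)) := by rw [Qv, Djx, Djy]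
  have Qyx : Q (f y x) = ((c⁻¹ : Rˣ):R) •
      ((f z z + L • f y z - (L*V) • f y y - V • f z y) * f x x) := by rw [Qv, Djy, Djx]
  by_cases hkx : (k:ℕ) = i
  · -- the hard case k = x
    have hk : k = x := Fin.eq_of_val_eq hkx
    rw [hk]
    simp only [map_sub, map_add, map_smul, Pxx, Pyy, Pzz, Qxx, Qyy, Qzz, Pyz, Pzy, Qxz, Qzx,
      Pxz, Pxy, Pzx, Pyx, Qxy, Qyx]
    simp only [mul_add, add_mul, mul_sub, sub_mul, smul_mul_assoc, mul_smul_comm, hrel,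
      smul_smul, smul_sub, smul_add, map_sub, map_add, map_smul, Pxx, Pyy, Pzz, Qxx, Qyy, Qzz,
      Pyz, Pzy, Qxz, Qzx, Pxz, Pxy, Pzx, Pyx, Qxy, Qyx]
    match_scalars
    · linear_combination (0)*hc + (0)*hv
    · linear_combination ((-1)*L*L*L*V*(c:R)*((c⁻¹:Rˣ):R) + L*L*L*(c:R)*((c⁻¹:Rˣ):R) + (-1)*L*L*V*(c:R)*((c⁻¹:Rˣ):R) + (-1)*L*L*L*V + L*L*(c:R)*((c⁻¹:Rˣ):R) + L*L*L + (-1)*L*L*V + (-1)*L)*hc + ((-1)*L*L)*hv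
    · linear_combination (L*L*L*V*V*(c:R)*((c⁻¹:Rˣ):R) + (-1)*L*L*V*V*V*(c:R)*((c⁻¹:Rˣ):R) + (-1)*L*L*L*V*(c:R)*((c⁻¹:Rˣ):R) + (2)*L*L*V*V*(c:R)*((c⁻¹:Rˣ):R) + (-1)*L*V*V*V*(c:R)*((c⁻¹:Rˣ):R) + L*L*L*V*V + (-1)*L*L*V*V*V + (-1)*L*L*V*(c:R)*((c⁻¹:Rˣ):R) + L*V*V*(c:R)*((c⁻¹:Rˣ):R) + (-1)*L*L*L*V + (2)*L*L*V*V + (-1)*L*V*V*V + (-1)*L*L*V + L*V*V)*hc + (L*L*V + (-1)*L*V*V + L*V)*hv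
    · linear_combination ((-1)*L*V*V*V*(c:R)*((c⁻¹:Rˣ):R) + L*V*V*(c:R)*((c⁻¹:Rˣ):R) + (-1)*V*V*V*(c:R)*((c⁻¹:Rˣ):R) + (-1)*L*V*V*V + V*V*(c:R)*((c⁻¹:Rˣ):R) + L*V*V + (-1)*V*V*V + V)*hc + ((-1)*V*V)*hv
    · linear_combination ((-1)*L*L*V*(c:R)*((c⁻¹:Rˣ):R) + L*L*(c:R)*((c⁻¹:Rˣ):R) + (-1)*L*V*(c:R)*((c⁻¹:Rˣ):R) + (-1)*L*L*V + L*(c:R)*((c⁻¹:Rˣ):R) + L*L + (-1)*L*V + L)*hc + ((-1)*L)*hv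
    · linear_combination (L*L*V*V*(c:R)*((c⁻¹:Rˣ):R) + (-1)*L*L*V*(c:R)*((c⁻¹:Rˣ):R) + L*V*V*(c:R)*((c⁻¹:Rˣ):R) + L*L*V*V + (-1)*L*V*(c:R)*((c⁻¹:Rˣ):R) + (-1)*L*L*V)*hc + (L*V)*hv
    · linear_combination (0)*hc + (0)*hv
    · linear_combination (L*L*V*V*(c:R)*((c⁻¹:Rˣ):R) + (-1)*L*L*V*(c:R)*((c⁻¹:Rˣ):R) + L*V*V*(c:R)*((c⁻¹:Rˣ):R) + L*L*V*V + (-1)*L*V*(c:R)*((c⁻¹:Rˣ):R) + L*V*V)*hc + (L*V)*hv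
    · linear_combination (L*V*V*(c:R)*((c⁻¹:Rˣ):R) + (-1)*L*V*(c:R)*((c⁻¹:Rˣ):R) + V*V*(c:R)*((c⁻¹:Rˣ):R) + L*V*V + (-1)*V*(c:R)*((c⁻¹:Rˣ):R) + (-1)*L*V + V*V + (-1)*V)*hc + (V)*hv
  · by_cases hky : (k:ℕ) = i+1
    · have hk : k = y := Fin.eq_of_val_eq hky
      rw [hk]
      simp only [map_sub, map_add, map_smul, Pxx, Pyy, Pzz, Qxx, Qyy, Qzz, Pyz, Pzy, Qxz, Qzx]
    · by_cases hkz : (k:ℕ) = i+2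
      · have hk : k = z := Fin.eq_of_val_eq hkz
        rw [hk]; simp only [Pzz, Qzz, Pyy, Qxx]
      · have Pk : P (f k k) = f k k :=
          phiOp_fix f c α β γ b hb1 hbf hγ hrel i h1 k k hkx hky hkx hky
        have Qk : Q (f k k) = f k k :=
          phiOp_fix f c α β γ b hb1 hbf hγ hrel (i+1) h2 k k
            (by omega) (by omega) (by omega) (by omega)
        simp only [Pk, Qk]

lemma comm_core (hb1 : b none = 1) (hbf : ∀ j k, b (some (j, k)) = f j k)
    (hγ : (γ : R) = (β : R) + (c : R) * (α : R))
    (hrel : ∀ i j k l, f i j * f k l = (c : R) • f i l)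
    (i j : ℕ) (hij : i + 1 < j) (hi : i + 1 < n) (hj : j + 1 < n) (k : Fin n) :
    phiOp f b c α β γ i hi (phiOp f b c α β γ j hj (f k k)) =
      phiOp f b c α β γ j hj (phiOp f b c α β γ i hi (f k k)) := by
  set P := phiOp f b c α β γ i hi with hPdef
  set Q := phiOp f b c α β γ j hj with hQdef
  have fixP : ∀ p q : Fin n, (p:ℕ) ≠ i → (p:ℕ) ≠ i+1 → (q:ℕ) ≠ i → (q:ℕ) ≠ i+1 →
      P (f p q) = f p q := fun p q h1 h2 h3 h4 =>
    phiOp_fix f c α β γ b hb1 hbf hγ hrel i hi p q h1 h2 h3 h4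
  have fixQ : ∀ p q : Fin n, (p:ℕ) ≠ j → (p:ℕ) ≠ j+1 → (q:ℕ) ≠ j → (q:ℕ) ≠ j+1 →
      Q (f p q) = f p q := fun p q h1 h2 h3 h4 =>
    phiOp_fix f c α β γ b hb1 hbf hγ hrel j hj p q h1 h2 h3 h4
  by_cases hkj : (k:ℕ) = j ∨ (k:ℕ) = j + 1
  · have hP : P (f k k) = f k k :=
      fixP k k (by omega) (by omega) (by omega) (by omega)
    rw [hP, phiOp_apply_diag f c α β γ b hb1 hbf hγ hrel j hj k]
    rcases hkj with hkj | hkj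
    · rw [braidDD_x' f c α β γ j hj k ⟨j+1, by omega⟩ hkj rfl]
      simp only [map_sub, map_add, map_smul]
      rw [fixP ⟨j+1, by omega⟩ ⟨j+1, by omega⟩ (by simp; omega) (by simp; omega)
          (by simp; omega) (by simp; omega),
        fixP k ⟨j+1, by omega⟩ (by omega) (by omega) (by simp; omega) (by simp; omega),
        fixP k k (by omega) (by omega) (by omega) (by omega),
        fixP ⟨j+1, by omega⟩ k (by simp; omega) (by simp; omega) (by omega) (by omega)]
    · rw [braidDD_y' f c α β γ j hj ⟨j, by omega⟩ k rfl hkj,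
        fixP ⟨j, by omega⟩ ⟨j, by omega⟩ (by simp; omega) (by simp; omega)
          (by simp; omega) (by simp; omega)]
  · push_neg at hkj
    have hQ : Q (f k k) = f k k := fixQ k k hkj.1 hkj.2 hkj.1 hkj.2
    rw [hQ, phiOp_apply_diag f c α β γ b hb1 hbf hγ hrel i hi k]
    by_cases hki : (k:ℕ) = i
    · rw [braidDD_x' f c α β γ i hi k ⟨i+1, by omega⟩ hki rfl]
      simp only [map_sub, map_add, map_smul]
      rw [fixQ ⟨i+1, by omega⟩ ⟨i+1, by omega⟩ (by simp; omega) (by simp; omega)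
          (by simp; omega) (by simp; omega),
        fixQ k ⟨i+1, by omega⟩ (by omega) (by omega) (by simp; omega) (by simp; omega),
        fixQ k k (by omega) (by omega) (by omega) (by omega),
        fixQ ⟨i+1, by omega⟩ k (by simp; omega) (by simp; omega) (by omega) (by omega)]
    · by_cases hki1 : (k:ℕ) = i + 1
      · rw [braidDD_y' f c α β γ i hi ⟨i, by omega⟩ k rfl hki1,
          fixQ ⟨i, by omega⟩ ⟨i, by omega⟩ (by simp; omega) (by simp; omega)
            (by simp; omega) (by simp; omega)]
      · rw [braidDD_other f c α β γ i hi k hki hki1, fixQ k k hkj.1 hkj.2 hkj.1 hkj.2]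

end Aux

/-- Under the parameter specializations (all `β_i = β`, all `c_{i,j} = c`, and
`α_i c_{i,i}` constant, i.e. a single `α`), the operators `φ(X_i)` on `T_n` satisfy
the braid relations, hence `φ` extends to a representation of the braid group `B_n`
on `T_n`. -/
theorem phiOp_braid_relations
    (R T : Type*) [CommRing R] [Ring T] [Algebra R T]
    (n : ℕ) (f : Fin n → Fin n → T) (b : Module.Basis (Option (Fin n × Fin n)) R T)
    (hb1 : b none = 1) (hbf : ∀ j k, b (some (j, k)) = f j k)
    (c α β γ : Rˣ) (hγ : (γ : R) = (β : R) + (c : R) * (α : R))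
    (hrel : ∀ i j k l, f i j * f k l = (c : R) • f i l) :
    (∀ i : ℕ, ∀ hi : i + 2 < n,
      (phiOp f b c α β γ i (by omega)) ∘ₗ (phiOp f b c α β γ (i + 1) hi) ∘ₗ
          (phiOp f b c α β γ i (by omega)) =
        (phiOp f b c α β γ (i + 1) hi) ∘ₗ (phiOp f b c α β γ i (by omega)) ∘ₗ
          (phiOp f b c α β γ (i + 1) hi)) ∧
    (∀ i j : ℕ, ∀ hi : i + 1 < n, ∀ hj : j + 1 < n, (i + 1 < j ∨ j + 1 < i) →
      (phiOp f b c α β γ i hi) ∘ₗ (phiOp f b c α β γ j hj) =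
        (phiOp f b c α β γ j hj) ∘ₗ (phiOp f b c α β γ i hi)) := by
  constructor
  · intro i hi
    apply b.ext
    intro u
    simp only [LinearMap.comp_apply]
    rcases u with _ | ⟨p, q⟩
    · simp only [hb1, phiOp_apply_one f c α β γ b hb1]
    · rw [hbf]
      have hf : f p q = ((c⁻¹ : Rˣ):R) • (f p p * f q q) := by
        rw [hrel, smul_smul, Units.inv_mul, one_smul]
      rw [hf]
      simp only [map_smul, phiOp_mul f c α β γ b hb1 hbf hγ hrel]
      rw [braid_core f c α β γ b hb1 hbf hγ hrel i _ _ p,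
        braid_core f c α β γ b hb1 hbf hγ hrel i _ _ q]
  · intro i j hi hj hij
    apply b.ext
    intro u
    simp only [LinearMap.comp_apply]
    rcases u with _ | ⟨p, q⟩
    · simp only [hb1, phiOp_apply_one f c α β γ b hb1]
    · rw [hbf]
      have hf : f p q = ((c⁻¹ : Rˣ):R) • (f p p * f q q) := by
        rw [hrel, smul_smul, Units.inv_mul, one_smul]
      rw [hf]
      simp only [map_smul, phiOp_mul f c α β γ b hb1 hbf hγ hrel]
      rcases hij with hij | hij
      · rw [comm_core f c α β γ b hb1 hbf hγ hrel i j hij hi hj p,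
          comm_core f c α β γ b hb1 hbf hγ hrel i j hij hi hj q]
      · rw [comm_core f c α β γ b hb1 hbf hγ hrel j i hij hj hi p,
          comm_core f c α β γ b hb1 hbf hγ hrel j i hij hj hi q]
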